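/- arXiv:1503.06370 — 2 statements merged into one kernel-verified Lean document; each statement's English description precedes it below -/
import Mathlib

section
/- Let X be an n×p real matrix with XᵀX = diag(d₁,…,d_p), dⱼ > 0 (orthogonal design), y ∈ ℝⁿ, σ² > 0, κ > 0, a > 0, b > 0, and G = diag(g₁,…,g_p) with gⱼ ∈ (0,1). Then the (unnormalized) marginal posterior density of G factorizes as a product over coordinates: det(G)ᵃ · det(I−G)^{b−1} · det(XᵀX + κ⁻¹ G XᵀX G)^{−1/2} · exp{(1/(2σ²)) yᵀX(XᵀX + κ⁻¹ G XᵀX G)⁻¹Xᵀy} = κ^{p/2}(∏ⱼ dⱼ)^{−1/2} · ∏ⱼ [ gⱼᵃ (1−gⱼ)^{b−1} (κ + gⱼ²)^{−1/2} exp{ κ(xⱼᵀy)² / (2σ² dⱼ (κ + gⱼ²)) } ]. Hence the gⱼ's are a posteriori independent under orthogonality. -/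
open Matrix

/-- Under an orthogonal design (`XᵀX = diag(d)`, `dⱼ > 0`), the unnormalized marginal
posterior density of `G = diag(g)` factorizes as a product over coordinates; hence the
`gⱼ`'s are a posteriori independent under orthogonality. -/
theorem kappaG_posterior_G_factorizes {n p : ℕ} (X : Matrix (Fin n) (Fin p) ℝ)
    (y : Fin n → ℝ) (d : Fin p → ℝ) (hd : ∀ j, 0 < d j)
    (hX : Xᵀ * X = Matrix.diagonal d) (σ2 κ a b : ℝ)
    (hσ : 0 < σ2) (hκ : 0 < κ) (ha : 0 < a) (hb : 0 < b)
    (g : Fin p → ℝ) (hg : ∀ j, g j ∈ Set.Ioo (0 : ℝ) 1) :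
    (Matrix.diagonal g).det ^ a * (1 - Matrix.diagonal g).det ^ (b - 1)
        * (Xᵀ * X + κ⁻¹ • (Matrix.diagonal g * (Xᵀ * X) * Matrix.diagonal g)).det ^ (-(1 : ℝ) / 2)
        * Real.exp ((1 / (2 * σ2)) * (y ⬝ᵥ (X *ᵥ
            ((Xᵀ * X + κ⁻¹ • (Matrix.diagonal g * (Xᵀ * X) * Matrix.diagonal g))⁻¹
              *ᵥ (Xᵀ *ᵥ y)))))
      = κ ^ ((p : ℝ) / 2) * (∏ j, d j) ^ (-(1 : ℝ) / 2)
          * ∏ j, g j ^ a * (1 - g j) ^ (b - 1) * (κ + g j ^ 2) ^ (-(1 : ℝ) / 2)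
              * Real.exp (κ * ((Xᵀ *ᵥ y) j) ^ 2 / (2 * σ2 * d j * (κ + g j ^ 2))) := by
  have hκg : ∀ j, 0 < κ + g j ^ 2 := fun j => by positivity
  set e : Fin p → ℝ := fun j => d j * (κ + g j ^ 2) / κ with he_def
  have he : ∀ j, 0 < e j := fun j => by
    have := hd j; have := hκg j; positivity
  -- the matrix is diagonal e
  have hM : Xᵀ * X + κ⁻¹ • (Matrix.diagonal g * (Xᵀ * X) * Matrix.diagonal g)
      = Matrix.diagonal e := by
    rw [hX, Matrix.diagonal_mul_diagonal, Matrix.diagonal_mul_diagonal]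
    ext i j
    rcases eq_or_ne i j with rfl | h
    · simp only [Matrix.add_apply, Matrix.smul_apply, Matrix.diagonal_apply_eq,
        smul_eq_mul, he_def]
      field_simp
    · simp [Matrix.diagonal_apply_ne _ h]
  rw [hM]
  -- inverse
  have hMinv : (Matrix.diagonal e)⁻¹ = Matrix.diagonal (fun j => (e j)⁻¹) := by
    apply Matrix.inv_eq_right_inv
    rw [Matrix.diagonal_mul_diagonal, ← Matrix.diagonal_one,
      Matrix.diagonal_eq_diagonal_iff]
    exact fun j => mul_inv_cancel₀ (he j).ne'

  rw [hMinv]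
  set c : Fin p → ℝ := Xᵀ *ᵥ y with hc
  -- quadratic form
  have hquad : y ⬝ᵥ (X *ᵥ ((Matrix.diagonal fun j => (e j)⁻¹) *ᵥ c))
      = ∑ j, (e j)⁻¹ * c j ^ 2 := by
    rw [Matrix.dotProduct_mulVec, ← Matrix.mulVec_transpose, ← hc]
    simp only [dotProduct, Matrix.mulVec_diagonal]
    refine Finset.sum_congr rfl fun j _ => by ring
  rw [hquad]
  -- determinants
  rw [Matrix.det_diagonal]
  have h1G : (1 : Matrix (Fin p) (Fin p) ℝ) - Matrix.diagonal g
      = Matrix.diagonal (fun j => 1 - g j) := by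
    rw [← Matrix.diagonal_one, ← Matrix.diagonal_sub]
  rw [h1G, Matrix.det_diagonal, Matrix.det_diagonal]
  -- turn powers of products into products of powers
  have hga : (∏ j, g j) ^ a = ∏ j, g j ^ a := by
    rw [← Real.finset_prod_rpow _ _ (fun j _ => (hg j).1.le)]
  have hgb : (∏ j, (1 - g j)) ^ (b - 1) = ∏ j, (1 - g j) ^ (b - 1) := by
    rw [← Real.finset_prod_rpow _ _ (fun j _ => by linarith [(hg j).2])]
  have hgd : (∏ j, e j) ^ (-(1:ℝ) / 2) = ∏ j, (e j) ^ (-(1:ℝ) / 2) := by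
    rw [← Real.finset_prod_rpow _ _ (fun j _ => (he j).le)]
  rw [hga, hgb, hgd]
  -- exp of sum
  have hexp : Real.exp ((1 / (2 * σ2)) * ∑ j, (e j)⁻¹ * c j ^ 2)
      = ∏ j, Real.exp (κ * c j ^ 2 / (2 * σ2 * d j * (κ + g j ^ 2))) := by
    rw [Finset.mul_sum, Real.exp_sum]
    refine Finset.prod_congr rfl fun j _ => ?_
    congr 1
    have hinv : (e j)⁻¹ = κ / (d j * (κ + g j ^ 2)) := by
      simp only [he_def]
      rw [inv_div]
    rw [hinv]
    have h1 : d j ≠ 0 := (hd j).ne'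
    have h2 : (κ + g j ^ 2) ≠ 0 := (hκg j).ne'
    have h3 : σ2 ≠ 0 := hσ.ne'
    field_simp
  rw [hexp]
  -- each e j factor
  have hej : ∀ j, (e j) ^ (-(1:ℝ)/2)
      = κ ^ ((1:ℝ)/2) * (d j) ^ (-(1:ℝ)/2) * (κ + g j ^ 2) ^ (-(1:ℝ)/2) := by
    intro j
    have hk2 : (κ⁻¹ : ℝ) ^ (-(1:ℝ)/2) = κ ^ ((1:ℝ)/2) := by
      rw [← Real.rpow_neg_one κ, ← Real.rpow_mul hκ.le]
      norm_num
    simp only [he_def]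
    rw [div_eq_mul_inv (d j * (κ + g j ^ 2)) κ,
      Real.mul_rpow (mul_nonneg (hd j).le (hκg j).le) (inv_nonneg.mpr hκ.le),
      Real.mul_rpow (hd j).le (hκg j).le, hk2]
    ring
  -- assemble
  have hκp : κ ^ ((p : ℝ) / 2) = ∏ _j : Fin p, κ ^ ((1:ℝ)/2) := by
    rw [Finset.prod_const, Finset.card_univ, Fintype.card_fin,
      ← Real.rpow_natCast (κ ^ ((1:ℝ)/2)) p, ← Real.rpow_mul hκ.le]
    congr 1
    ring
  have hdp : (∏ j, d j) ^ (-(1:ℝ)/2) = ∏ j, (d j) ^ (-(1:ℝ)/2) := by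
    rw [← Real.finset_prod_rpow _ _ (fun j _ => (hd j).le)]
  rw [hκp, hdp, ← Finset.prod_mul_distrib, ← Finset.prod_mul_distrib,
    ← Finset.prod_mul_distrib, ← Finset.prod_mul_distrib, ← Finset.prod_mul_distrib]
  refine Finset.prod_congr rfl fun j _ => ?_
  rw [hej j]
  ring
end

section
/- Let X be an n×p real matrix whose Gram matrix is diagonal with positive entries, XᵀX = diag(d₁,…,d_p) with each dⱼ > 0 (orthogonal design), let y ∈ ℝⁿ, κ > 0, and G = diag(g₁,…,g_p) with gⱼ ∈ [0,1]. Then the κ-G posterior mean is diagonal-rescaled OLS: for every j, the j-th entry of μ̃ = (XᵀX + κ⁻¹ G XᵀX G)⁻¹ Xᵀy equals (κ/(κ + gⱼ²)) · (xⱼᵀy)/dⱼ = (κ/(κ + gⱼ²)) · β̂ⱼ^{OLS}, where xⱼ is the j-th column of X. In particular, if gⱼ = 0 then μ̃ⱼ = β̂ⱼ^{OLS}, and μ̃ⱼ → β̂ⱼ^{OLS} as gⱼ → 0. -/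
open Matrix

/-- Under an orthogonal design (`XᵀX = diag(d)`, `dⱼ > 0`), the κ-G posterior mean is
diagonal-rescaled OLS: the `j`-th entry of `μ̃ = (XᵀX + κ⁻¹ G XᵀX G)⁻¹ Xᵀy` equals
`(κ/(κ + gⱼ²))·(xⱼᵀy)/dⱼ = (κ/(κ + gⱼ²))·β̂ⱼ^{OLS}`. -/
theorem kappaG_posterior_mean_orthogonal {n p : ℕ} (X : Matrix (Fin n) (Fin p) ℝ)
    (y : Fin n → ℝ) (d : Fin p → ℝ) (hd : ∀ j, 0 < d j)
    (hX : Xᵀ * X = Matrix.diagonal d) (κ : ℝ) (hκ : 0 < κ)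
    (g : Fin p → ℝ) (hg : ∀ j, g j ∈ Set.Icc (0 : ℝ) 1) (j : Fin p) :
    ((Xᵀ * X + κ⁻¹ • (Matrix.diagonal g * (Xᵀ * X) * Matrix.diagonal g))⁻¹
        *ᵥ (Xᵀ *ᵥ y)) j
      = (κ / (κ + g j ^ 2)) * ((Xᵀ *ᵥ y) j / d j) := by
  rw [hX]
  have h1 : Matrix.diagonal d + κ⁻¹ • (Matrix.diagonal g * Matrix.diagonal d * Matrix.diagonal g)
      = Matrix.diagonal (fun j => d j + κ⁻¹ * (g j * d j * g j)) := by
    rw [Matrix.diagonal_mul_diagonal, Matrix.diagonal_mul_diagonal]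
    ext i k
    by_cases h : i = k <;> simp [Matrix.diagonal, h]
  have hpos : ∀ i, (0:ℝ) < d i + κ⁻¹ * (g i * d i * g i) := by
    intro i
    have hsq : 0 ≤ g i * d i * g i := by nlinarith [sq_nonneg (g i), (hd i).le]
    have : 0 ≤ κ⁻¹ * (g i * d i * g i) := by positivity
    linarith [hd i]
  have hinv : (Matrix.diagonal (fun i => d i + κ⁻¹ * (g i * d i * g i)))⁻¹
      = Matrix.diagonal (fun i => (d i + κ⁻¹ * (g i * d i * g i))⁻¹) := by
    apply Matrix.inv_eq_right_inv
    rw [Matrix.diagonal_mul_diagonal]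
    convert Matrix.diagonal_one using 2
    ext i
    exact mul_inv_cancel₀ (hpos i).ne'
  rw [h1, hinv, Matrix.mulVec_diagonal]
  have hκ' := hκ.ne'
  have hdj := (hd j).ne'
  have hden : κ + g j ^ 2 ≠ 0 := by positivity
  have h2 : κ * d j + g j ^ 2 * d j ≠ 0 := by
    nlinarith [mul_pos hκ (hd j), sq_nonneg (g j), (hd j).le]
  have h3 : d j * κ + g j * d j * g j ≠ 0 := by
    nlinarith [mul_pos hκ (hd j), sq_nonneg (g j), (hd j).le]
  field_simp
end
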